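/- On a rooted directed graph, if φ is a set of vertices such that every edge into φ from outside φ enters at a single vertex i ∈ φ (i.e., Sybil identities of i have no incoming edges from vertices outside φ other than via i), then i dominates every vertex of φ reachable from the root; moreover the vertices of φ lying on the dominator sequence of any vertex form a contiguous subsequence starting at i. -/

import Mathlib

/-- `p` is a directed walk from `a` to `b` in the graph with adjacency `adj`. -/
def IsWalk {V : Type*} (adj : V → V → Prop) (a b : V) (p : List V) : Prop :=
  p.head? = some a ∧ p.getLast? = some b ∧ p.Chain' adj

/-- `b` is reachable from `a`. -/
def Reaches {V : Type*} (adj : V → V → Prop) (a b : V) : Prop :=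
  ∃ p, IsWalk adj a b p

/-- `u` dominates `x` (w.r.t. root `s`): every walk from `s` to `x` contains `u`. -/
def Dom {V : Type*} (adj : V → V → Prop) (s u x : V) : Prop :=
  ∀ p, IsWalk adj s x p → u ∈ p

/-- First-occurrence split. -/
lemma mem_split_first {V : Type*} {a : V} {l : List V} (h : a ∈ l) :
    ∃ s t, l = s ++ a :: t ∧ a ∉ s := by
  induction l with
  | nil => simp at h
  | cons x xs ih =>
    by_cases hx : x = a
    · exact ⟨[], xs, by simp [hx], by simp⟩
    · rcases List.mem_cons.1 h with h' | h'
      · exact absurd h'.symm hx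
      · rcases ih h' with ⟨s, t, rfl, hn⟩
        exact ⟨x :: s, t, by simp, by
          simp only [List.mem_cons, not_or]
          exact ⟨fun hh => hx hh.symm, hn⟩⟩

/-- Last-occurrence split. -/
lemma mem_split_last {V : Type*} {a : V} {l : List V} (h : a ∈ l) :
    ∃ s t, l = s ++ a :: t ∧ a ∉ t := by
  rcases mem_split_first (l := l.reverse) (by simpa using h) with ⟨s, t, he, hn⟩
  refine ⟨t.reverse, s.reverse, ?_, by simpa using hn⟩
  have := congrArg List.reverse he
  simpa using this

lemma walk_prefix {V : Type*} {adj : V → V → Prop} {a b m : V} {q r : List V}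
    (h : IsWalk adj a b (q ++ m :: r)) : IsWalk adj a m (q ++ [m]) := by
  obtain ⟨h1, h2, h3⟩ := h
  refine ⟨?_, by simp, h3.prefix ⟨r, by simp⟩⟩
  cases q with
  | nil => simpa using h1
  | cons x xs => simpa using h1

lemma walk_suffix {V : Type*} {adj : V → V → Prop} {a b m : V} {q r : List V}
    (h : IsWalk adj a b (q ++ m :: r)) : IsWalk adj m b (m :: r) := by
  obtain ⟨h1, h2, h3⟩ := h
  refine ⟨by simp, ?_, h3.suffix ⟨q, rfl⟩⟩
  rw [List.getLast?_append_cons] at h2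
  exact h2

/-- Any walk from outside `φ` into `φ` passes through the entry vertex `i`. -/
lemma entry_lemma {V : Type*} {adj : V → V → Prop} {φ : Set V} {i : V}
    (hedge : ∀ u w : V, adj u w → w ∈ φ → w ≠ i → u ∈ φ) :
    ∀ (p : List V) (a b : V), IsWalk adj a b p → a ∉ φ → b ∈ φ → i ∈ p := by
  intro p
  induction p with
  | nil => intro a b h; simp [IsWalk] at h
  | cons x t ih =>
    intro a b h ha hb
    obtain ⟨h1, h2, h3⟩ := h
    have hx : x = a := by simpa using h1
    subst hx
    cases t with
    | nil =>
      have hba : b = x := by simpa using h2.symm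
      exact absurd (hba ▸ hb) ha
    | cons y t' =>
      rcases List.isChain_cons_cons.1 h3 with ⟨hadj, hch⟩
      by_cases hyi : y = i
      · simp [hyi]
      · by_cases hy : y ∈ φ
        · exact absurd (hedge x y hadj hy hyi) ha
        · have hw : IsWalk adj y b (y :: t') :=
            ⟨rfl, by rw [List.getLast?_cons_cons] at h2; exact h2, hch⟩
          exact List.mem_cons.2 (Or.inr (ih y b hw hy hb))

/-- If `φ` is a set of Sybil identities of `i` (every edge into `φ \\ {i}` comes
from inside `φ`, and `s ∉ φ`), then `i` dominates every vertex of `φ`; moreover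
the vertices of `φ` on any dominator sequence are contiguous: any vertex `v`
dominated between two dominators `u, w ∈ φ` of a common vertex `x` is itself
in `φ`. -/
theorem stmt15 {V : Type*} [Fintype V] (adj : V → V → Prop) (s : V)
    (hreach : ∀ x : V, Reaches adj s x)
    (φ : Set V) (i : V) (hi : i ∈ φ) (hs : s ∉ φ)
    (hedge : ∀ u w : V, adj u w → w ∈ φ → w ≠ i → u ∈ φ) :
    (∀ w ∈ φ, Dom adj s i w) ∧
    (∀ x u v w : V, u ∈ φ → w ∈ φ →
      Dom adj s u x → Dom adj s v x → Dom adj s w x →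
      Dom adj s u v → Dom adj s v w → v ∈ φ) := by
  have part1 : ∀ w ∈ φ, Dom adj s i w := fun w hw p hp =>
    entry_lemma hedge p s w hp hs hw
  refine ⟨part1, ?_⟩
  intro x u v w hu hw _ _ _ huv hvw
  by_contra hv
  have hvi : v ≠ i := fun h => hv (h ▸ hi)
  have hvu : v ≠ u := fun h => hv (h ▸ hu)
  obtain ⟨p, hp⟩ := hreach w
  have hvp : v ∈ p := hvw p hp
  -- split at the first occurrence of v
  obtain ⟨q, r, rfl, hvq⟩ := mem_split_first hvp
  have hpre : IsWalk adj s v (q ++ [v]) := walk_prefix hp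
  have huq : u ∈ q := by
    rcases List.mem_append.1 (huv _ hpre) with h' | h'
    · exact h'
    · exact absurd (List.mem_singleton.1 h').symm hvu
  obtain ⟨q1, q2, hq, _⟩ := mem_split_first huq
  have hp' : IsWalk adj s w (q1 ++ u :: (q2 ++ v :: r)) := by
    rw [hq] at hp; simpa using hp
  have hwu : IsWalk adj s u (q1 ++ [u]) := walk_prefix hp'
  obtain ⟨a1, a2, ha, _⟩ := mem_split_first (part1 u hu _ hwu)
  have hwi : IsWalk adj s i (a1 ++ [i]) := walk_prefix (ha ▸ hwu)
  have hvq1u : v ∉ q1 ++ [u] := by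
    intro hm
    rcases List.mem_append.1 hm with h' | h'
    · exact hvq (hq ▸ List.mem_append.2 (Or.inl h'))
    · exact hvu (List.mem_singleton.1 h')
  have hva1 : v ∉ a1 := fun hm => hvq1u (ha ▸ List.mem_append.2 (Or.inl hm))
  -- split at the last occurrence of v
  obtain ⟨e, f, hef, hvf⟩ := mem_split_last hvp
  have hwv : IsWalk adj v w (v :: f) := walk_suffix (hef ▸ hp)
  have hif : i ∈ f := by
    rcases List.mem_cons.1 (entry_lemma hedge _ v w hwv hv hw) with h' | h'
    · exact absurd h'.symm hvi
    · exact h'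
  obtain ⟨g, h2l, hfg, _⟩ := mem_split_first hif
  have hwv' : IsWalk adj v w ((v :: g) ++ i :: h2l) := by
    rw [hfg] at hwv; simpa using hwv
  have hwiw : IsWalk adj i w (i :: h2l) := walk_suffix hwv'
  have hvh : v ∉ h2l := fun hm =>
    hvf (hfg ▸ List.mem_append.2 (Or.inr (List.mem_cons.2 (Or.inr hm))))
  -- build a walk from s to w avoiding v
  obtain ⟨hh1, _, hh3⟩ := hwi
  obtain ⟨_, hl2, hl3⟩ := hwiw
  simp only [List.Chain'] at hh3
  rw [List.isChain_append] at hh3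
  obtain ⟨hc1, _, hc3⟩ := hh3
  have hfinal : IsWalk adj s w (a1 ++ i :: h2l) := by
    refine ⟨?_, ?_, ?_⟩
    · cases a1 with
      | nil => simpa using hh1
      | cons z zs => simpa using hh1
    · rw [List.getLast?_append_cons]
      simpa using hl2
    · simp only [List.Chain']
      rw [List.isChain_append]
      refine ⟨hc1, hl3, ?_⟩
      intro x hx y hy
      have hyi : i = y := by simpa using hy
      exact hyi ▸ hc3 x hx i (by simp)
  have hvmem : v ∈ a1 ++ i :: h2l := hvw _ hfinal
  rcases List.mem_append.1 hvmem with h' | h'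
  · exact hva1 h'
  · rcases List.mem_cons.1 h' with h'' | h''
    · exact hvi h''
    · exact hvh h''
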